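/- (Chen's identity.) Let X : [0,1] → ℝ^d be a continuously differentiable path, let 0 ≤ s < t < u ≤ 1, and let (i₁,…,i_k) ∈ {1,…,d}^k be a multi-index. Then S^{(i₁,…,i_k)}_{[s,u]}(X) = Σ_{ℓ=0}^{k} S^{(i₁,…,i_ℓ)}_{[s,t]}(X) · S^{(i_{ℓ+1},…,i_k)}_{[t,u]}(X), where the ℓ = 0 and ℓ = k terms use the convention that the empty-index coefficient equals 1. -/

import Mathlib

open MeasureTheory ProbabilityTheory
open scoped RealInnerProductSpace BigOperators ENNReal

noncomputable section

/-- Index set for the signature truncated at order `m` of a `d`-dimensional path: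
multi-indices `(i₁, …, i_k) ∈ {1,…,d}^k` with `k ≤ m`. -/
abbrev SigIdx (d m : ℕ) := Σ k : Fin (m + 1), (Fin (k : ℕ) → Fin d)

/-- Signature coefficient of a path `X` along the multi-index `I` on `[a, b]`:
the integral over the simplex `{a ≤ u₁ < ⋯ < u_k ≤ b}` of the product of the
derivatives of the coordinates of `X` selected by `I`. -/
def sigCoeffOn {d : ℕ} (X : ℝ → EuclideanSpace ℝ (Fin d)) {k : ℕ}
    (I : Fin k → Fin d) (a b : ℝ) : ℝ :=
  ∫ u in {u : Fin k → ℝ | (∀ i, u i ∈ Set.Icc a b) ∧ StrictMono u},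
    ∏ i, deriv (fun t => X t (I i)) (u i)

/-- Signature coefficient on `[0, 1]`. -/
def sigCoeff {d : ℕ} (X : ℝ → EuclideanSpace ℝ (Fin d)) {k : ℕ}
    (I : Fin k → Fin d) : ℝ :=
  sigCoeffOn X I 0 1

/-- Signature of `X` truncated at order `m`, as a vector of `ℝ^{s_d(m)}`
with the Euclidean norm. -/
def truncSig (d m : ℕ) (X : ℝ → EuclideanSpace ℝ (Fin d)) :
    EuclideanSpace ℝ (SigIdx d m) :=
  (WithLp.equiv 2 (SigIdx d m → ℝ)).symm fun p => sigCoeff X p.2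

/-- Total variation of a continuously differentiable path on `[0,1]`. -/
def pathTV {d : ℕ} (X : ℝ → EuclideanSpace ℝ (Fin d)) : ℝ :=
  ∫ t in (0:ℝ)..1, ‖deriv X t‖

/-- `s_d(m) = Σ_{k=0}^m d^k`, as a real number. -/
def sdim (d m : ℕ) : ℝ := ∑ k ∈ Finset.range (m + 1), (d : ℝ) ^ k

variable {Ω : Type*} [MeasurableSpace Ω]

/-- Theoretical risk `R_m(β) = E (Y − ⟨β, S^m(X)⟩)²`. -/
def risk (P : Measure Ω) (d : ℕ) (X : Ω → ℝ → EuclideanSpace ℝ (Fin d))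
    (Y : Ω → ℝ) (m : ℕ) (β : EuclideanSpace ℝ (SigIdx d m)) : ℝ :=
  ∫ ω, (Y ω - ⟪β, truncSig d m (X ω)⟫) ^ 2 ∂P

/-- `L(m) = inf_{‖β‖ ≤ α} R_m(β)`. -/
def Lfun (P : Measure Ω) (d : ℕ) (X : Ω → ℝ → EuclideanSpace ℝ (Fin d))
    (Y : Ω → ℝ) (α : ℝ) (m : ℕ) : ℝ :=
  sInf (risk P d X Y m '' Metric.closedBall 0 α)

/-- Empirical risk `R̂_{m,n}(β) = (1/n) Σ_{i<n} (Y_i − ⟨β, S^m(X_i)⟩)²`. -/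
def empRisk (d : ℕ) (Xs : ℕ → Ω → ℝ → EuclideanSpace ℝ (Fin d))
    (Ys : ℕ → Ω → ℝ) (n m : ℕ) (β : EuclideanSpace ℝ (SigIdx d m)) (ω : Ω) : ℝ :=
  (1 / n : ℝ) * ∑ i ∈ Finset.range n, (Ys i ω - ⟪β, truncSig d m (Xs i ω)⟫) ^ 2

/-- `L̂_n(m) = min_{‖β‖ ≤ α} R̂_{m,n}(β)`. -/
def empL (d : ℕ) (Xs : ℕ → Ω → ℝ → EuclideanSpace ℝ (Fin d))
    (Ys : ℕ → Ω → ℝ) (α : ℝ) (n m : ℕ) (ω : Ω) : ℝ :=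
  sInf ((fun β => empRisk d Xs Ys n m β ω) '' Metric.closedBall 0 α)

/-- Penalization `pen_n(m) = K_pen n^{−ρ} √(s_d(m))`. -/
def pen (d : ℕ) (Kpen ρ : ℝ) (n m : ℕ) : ℝ :=
  Kpen * (n : ℝ) ^ (-ρ) * Real.sqrt (sdim d m)

/-- The estimator `m̂`: the smallest minimizer of `m ↦ L̂_n(m) + pen_n(m)`. -/
def hatm (d : ℕ) (Xs : ℕ → Ω → ℝ → EuclideanSpace ℝ (Fin d))
    (Ys : ℕ → Ω → ℝ) (α Kpen ρ : ℝ) (n : ℕ) (ω : Ω) : ℕ :=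
  sInf {m : ℕ | ∀ k : ℕ,
    empL d Xs Ys α n m ω + pen d Kpen ρ n m ≤ empL d Xs Ys α n k ω + pen d Kpen ρ n k}

/-- Centered empirical risk process `Z_{m,n}(β) = R̂_{m,n}(β) − R_m(β)`. -/
def Zproc (P : Measure Ω) (d : ℕ) (X : Ω → ℝ → EuclideanSpace ℝ (Fin d)) (Y : Ω → ℝ)
    (Xs : ℕ → Ω → ℝ → EuclideanSpace ℝ (Fin d)) (Ys : ℕ → Ω → ℝ)
    (n m : ℕ) (β : EuclideanSpace ℝ (SigIdx d m)) (ω : Ω) : ℝ :=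
  empRisk d Xs Ys n m β ω - risk P d X Y m β


namespace ChenAux

def simplexSet (a b : ℝ) (n : ℕ) : Set (Fin n → ℝ) :=
  {x : Fin n → ℝ | (∀ i, x i ∈ Set.Icc a b) ∧ StrictMono x}

def Tset (s t u : ℝ) (n ℓ : ℕ) : Set (Fin n → ℝ) :=
  {x : Fin n → ℝ | (∀ i, x i ∈ Set.Icc s u) ∧ StrictMono x ∧
    (∀ i : Fin n, (i : ℕ) < ℓ → x i < t) ∧ (∀ i : Fin n, ℓ ≤ (i : ℕ) → t ≤ x i)}

def splitMap (ℓ m : ℕ) : ((Fin ℓ → ℝ) × (Fin m → ℝ)) ≃ᵐ (Fin (ℓ + m) → ℝ) :=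
  (MeasurableEquiv.sumPiEquivProdPi (fun _ : Fin ℓ ⊕ Fin m => ℝ)).symm.trans
    (MeasurableEquiv.piCongrLeft (fun _ : Fin (ℓ + m) => ℝ) finSumFinEquiv)

lemma splitMap_mp (ℓ m : ℕ) : MeasurePreserving (splitMap ℓ m) volume volume :=
  (volume_measurePreserving_piCongrLeft (fun _ : Fin (ℓ + m) => ℝ) finSumFinEquiv).comp
    (volume_measurePreserving_sumPiEquivProdPi_symm (fun _ : Fin ℓ ⊕ Fin m => ℝ))

lemma splitMap_left {ℓ m : ℕ} (x : Fin ℓ → ℝ) (y : Fin m → ℝ) (i : Fin (ℓ + m))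
    (hi : (i : ℕ) < ℓ) : splitMap ℓ m (x, y) i = x ⟨(i : ℕ), hi⟩ := by
  have hi' : i = finSumFinEquiv (Sum.inl ⟨(i : ℕ), hi⟩) := Fin.ext (by simp)
  conv_lhs => rw [hi']
  exact Equiv.piCongrLeft_sumInl (fun _ : Fin (ℓ + m) => ℝ) finSumFinEquiv x y ⟨(i : ℕ), hi⟩

lemma splitMap_right {ℓ m : ℕ} (x : Fin ℓ → ℝ) (y : Fin m → ℝ) (i : Fin (ℓ + m))
    (hi : ℓ ≤ (i : ℕ)) : splitMap ℓ m (x, y) i = y ⟨(i : ℕ) - ℓ, by omega⟩ := by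
  have hi' : i = finSumFinEquiv (Sum.inr ⟨(i : ℕ) - ℓ, by omega⟩) := Fin.ext (by simp; omega)
  conv_lhs => rw [hi']
  exact Equiv.piCongrLeft_sumInr (fun _ : Fin (ℓ + m) => ℝ) finSumFinEquiv x y _

lemma hyperplane_null {n : ℕ} (j : Fin n) (t : ℝ) :
    volume {x : Fin n → ℝ | x j = t} = 0 := by
  have h : {x : Fin n → ℝ | x j = t} =
      Set.univ.pi fun i => if i = j then ({t} : Set ℝ) else Set.univ := by
    ext x
    simp only [Set.mem_setOf_eq, Set.mem_univ_pi]
    constructor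
    · intro hx i
      by_cases hi : i = j
      · subst hi; simp [hx]
      · simp [hi]
    · intro hx; have := hx j; simpa using this
  rw [h, volume_pi, Measure.pi_pi]
  exact Finset.prod_eq_zero (Finset.mem_univ j) (by simp)

/-- Preimage of the piece `Tset` under the splitting map. -/
lemma splitMap_preimage (ℓ m : ℕ) (s t u : ℝ) (hst : s ≤ t) (htu : t ≤ u) :
    splitMap ℓ m ⁻¹' Tset s t u (ℓ + m) ℓ =
      ({x : Fin ℓ → ℝ | (∀ j, x j ∈ Set.Ico s t) ∧ StrictMono x} ×ˢ simplexSet t u m) := by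
  ext ⟨x, y⟩
  simp only [Set.mem_preimage, Tset, Set.mem_setOf_eq, Set.mem_prod, simplexSet]
  constructor
  · rintro ⟨h1, h2, h3, h4⟩
    refine ⟨⟨fun j => ?_, fun j j' hjj' => ?_⟩, ⟨fun j => ?_, fun j j' hjj' => ?_⟩⟩
    · have hL : splitMap ℓ m (x, y) ⟨(j : ℕ), by omega⟩ = x j := by
        rw [splitMap_left x y ⟨(j : ℕ), by omega⟩ (by simpa using j.isLt)]
      constructor
      · have := (h1 ⟨(j : ℕ), by omega⟩).1; rwa [hL] at this
      · have := h3 ⟨(j : ℕ), by omega⟩ (by simpa using j.isLt); rwa [hL] at this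
    · have hL : ∀ j : Fin ℓ, splitMap ℓ m (x, y) ⟨(j : ℕ), by omega⟩ = x j := fun j => by
        rw [splitMap_left x y ⟨(j : ℕ), by omega⟩ (by simpa using j.isLt)]
      have := h2 (show (⟨(j : ℕ), by omega⟩ : Fin (ℓ + m)) < ⟨(j' : ℕ), by omega⟩ from
        Fin.mk_lt_mk.mpr hjj')
      rwa [hL j, hL j'] at this
    · have hR : splitMap ℓ m (x, y) ⟨ℓ + (j : ℕ), by omega⟩ = y j := by
        rw [splitMap_right x y ⟨ℓ + (j : ℕ), by omega⟩ (by simp)]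
        exact congrArg y (Fin.ext (by simp))
      constructor
      · have := h4 ⟨ℓ + (j : ℕ), by omega⟩ (by simp); rwa [hR] at this
      · have := (h1 ⟨ℓ + (j : ℕ), by omega⟩).2; rwa [hR] at this
    · have hR : ∀ j : Fin m, splitMap ℓ m (x, y) ⟨ℓ + (j : ℕ), by omega⟩ = y j := fun j => by
        rw [splitMap_right x y ⟨ℓ + (j : ℕ), by omega⟩ (by simp)]
        exact congrArg y (Fin.ext (by simp))
      have := h2 (show (⟨ℓ + (j : ℕ), by omega⟩ : Fin (ℓ + m)) < ⟨ℓ + (j' : ℕ), by omega⟩ from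
        Fin.mk_lt_mk.mpr (by have h := Fin.lt_def.mp hjj'; omega))
      rwa [hR j, hR j'] at this
  · rintro ⟨⟨hA1, hA2⟩, hB1, hB2⟩
    have key : ∀ i : Fin (ℓ + m),
        ((i : ℕ) < ℓ → ∃ j : Fin ℓ, splitMap ℓ m (x, y) i = x j ∧ (j : ℕ) = (i : ℕ)) ∧
        (ℓ ≤ (i : ℕ) → ∃ j : Fin m, splitMap ℓ m (x, y) i = y j ∧ ℓ + (j : ℕ) = (i : ℕ)) := by
      intro i
      constructor
      · intro hi
        exact ⟨⟨(i : ℕ), hi⟩, splitMap_left x y i hi, rfl⟩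
      · intro hi
        exact ⟨⟨(i : ℕ) - ℓ, by omega⟩, splitMap_right x y i hi, by simp; omega⟩
    refine ⟨fun i => ?_, fun i i' hii' => ?_, fun i hi => ?_, fun i hi => ?_⟩
    · by_cases hi : (i : ℕ) < ℓ
      · obtain ⟨j, hj, -⟩ := (key i).1 hi
        rw [hj]
        exact ⟨(hA1 j).1, le_trans (le_of_lt (hA1 j).2) htu⟩
      · obtain ⟨j, hj, -⟩ := (key i).2 (by omega)
        rw [hj]
        exact ⟨le_trans hst (hB1 j).1, (hB1 j).2⟩
    · have hlt : (i : ℕ) < (i' : ℕ) := hii'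
      by_cases hi : (i : ℕ) < ℓ
      · obtain ⟨j, hj, hjv⟩ := (key i).1 hi
        by_cases hi' : (i' : ℕ) < ℓ
        · obtain ⟨j', hj', hjv'⟩ := (key i').1 hi'
          rw [hj, hj']
          exact hA2 (show j < j' by rw [Fin.lt_def]; omega)
        · obtain ⟨j', hj', -⟩ := (key i').2 (by omega)
          rw [hj, hj']
          exact lt_of_lt_of_le (hA1 j).2 (hB1 j').1
      · by_cases hi' : (i' : ℕ) < ℓ
        · omega
        · obtain ⟨j, hj, hjv⟩ := (key i).2 (by omega)
          obtain ⟨j', hj', hjv'⟩ := (key i').2 (by omega)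
          rw [hj, hj']
          exact hB2 (show j < j' by rw [Fin.lt_def]; omega)
    · obtain ⟨j, hj, -⟩ := (key i).1 hi
      rw [hj]; exact (hA1 j).2
    · obtain ⟨j, hj, -⟩ := (key i).2 hi
      rw [hj]; exact (hB1 j).1


lemma measurableSet_strictMono (n : ℕ) :
    MeasurableSet {x : Fin n → ℝ | StrictMono x} := by
  have h : {x : Fin n → ℝ | StrictMono x} =
      ⋂ (p : Fin n × Fin n) (_ : p.1 < p.2), {x : Fin n → ℝ | x p.1 < x p.2} := by
    ext x
    simp only [Set.mem_setOf_eq, Set.mem_iInter]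
    exact ⟨fun h p hp => h hp, fun h i j hij => h (i, j) hij⟩
  rw [h]
  exact MeasurableSet.iInter fun p => MeasurableSet.iInter fun _ =>
    measurableSet_lt (measurable_pi_apply _) (measurable_pi_apply _)

lemma measurableSet_box (a b : ℝ) (n : ℕ) :
    MeasurableSet {x : Fin n → ℝ | ∀ i, x i ∈ Set.Icc a b} := by
  have h : {x : Fin n → ℝ | ∀ i, x i ∈ Set.Icc a b} =
      ⋂ i, (fun x : Fin n → ℝ => x i) ⁻¹' Set.Icc a b := by
    ext x; simp [Set.mem_iInter]
  rw [h]
  exact MeasurableSet.iInter fun i => (measurable_pi_apply i) measurableSet_Icc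

lemma measurableSet_simplex (a b : ℝ) (n : ℕ) : MeasurableSet (simplexSet a b n) := by
  have h : simplexSet a b n =
      {x : Fin n → ℝ | ∀ i, x i ∈ Set.Icc a b} ∩ {x : Fin n → ℝ | StrictMono x} := rfl
  rw [h]
  exact (measurableSet_box a b n).inter (measurableSet_strictMono n)

lemma measurableSet_Tset (s t u : ℝ) (n ℓ : ℕ) : MeasurableSet (Tset s t u n ℓ) := by
  have h : Tset s t u n ℓ =
      ({x : Fin n → ℝ | ∀ i, x i ∈ Set.Icc s u} ∩ {x : Fin n → ℝ | StrictMono x}) ∩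
      ((⋂ i : Fin n, {x : Fin n → ℝ | (i : ℕ) < ℓ → x i < t}) ∩
        (⋂ i : Fin n, {x : Fin n → ℝ | ℓ ≤ (i : ℕ) → t ≤ x i})) := by
    ext x
    simp only [Tset, Set.mem_setOf_eq, Set.mem_inter_iff, Set.mem_iInter]
    tauto
  rw [h]
  refine ((measurableSet_box s u n).inter (measurableSet_strictMono n)).inter
    (MeasurableSet.inter ?_ ?_)
  · refine MeasurableSet.iInter fun i => ?_
    by_cases hi : (i : ℕ) < ℓ
    · simp only [hi, forall_true_left]
      exact measurableSet_lt (measurable_pi_apply i) measurable_const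
    · simp only [hi, false_implies]
      exact MeasurableSet.univ.congr (by ext x; simp [hi])
  · refine MeasurableSet.iInter fun i => ?_
    by_cases hi : ℓ ≤ (i : ℕ)
    · simp only [hi, forall_true_left]
      exact measurableSet_le measurable_const (measurable_pi_apply i)
    · exact MeasurableSet.univ.congr (by ext x; simp [hi])

lemma integrableOn_of_subset_box {n : ℕ} {F : (Fin n → ℝ) → ℝ} (hF : Continuous F)
    (a b : ℝ) {A : Set (Fin n → ℝ)}
    (hA : A ⊆ Set.univ.pi fun _ => Set.Icc a b) : IntegrableOn F A := by
  have hc : IsCompact (Set.univ.pi fun _ : Fin n => Set.Icc a b) :=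
    isCompact_univ_pi fun _ => isCompact_Icc
  exact (hF.continuousOn.integrableOn_compact hc).mono_set hA


/-- The `Ico`-simplex is a.e. equal to the `Icc`-simplex. -/
lemma ico_simplex_ae (s t : ℝ) (ℓ : ℕ) :
    {x : Fin ℓ → ℝ | (∀ j, x j ∈ Set.Ico s t) ∧ StrictMono x} =ᵐ[volume] simplexSet s t ℓ := by
  rw [MeasureTheory.ae_eq_set]
  constructor
  · refine measure_mono_null (fun x hx => ?_) (measure_empty)
    exact absurd ⟨fun j => ⟨(hx.1.1 j).1, le_of_lt (hx.1.1 j).2⟩, hx.1.2⟩ hx.2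
  · refine measure_mono_null (t := ⋃ j : Fin ℓ, {x : Fin ℓ → ℝ | x j = t}) (fun x hx => ?_) ?_
    · obtain ⟨⟨hx1, hx2⟩, hx3⟩ := hx
      simp only [Set.mem_setOf_eq, not_and, Set.mem_iUnion] at hx3 ⊢
      by_contra hcon
      push_neg at hcon
      refine hx3 (fun j => ⟨(hx1 j).1, lt_of_le_of_ne (hx1 j).2 (hcon j)⟩) hx2
    · exact measure_iUnion_null fun j => hyperplane_null j t

/-- Factorization of the integral over one piece. -/
lemma split_integral {ℓ m n : ℕ} (h : ℓ + m = n) (f : Fin n → ℝ → ℝ)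
    (hf : ∀ i, Continuous (f i)) (s t u : ℝ) (hst : s ≤ t) (htu : t ≤ u) :
    ∫ x in Tset s t u n ℓ, ∏ i, f i (x i) =
      (∫ x in simplexSet s t ℓ, ∏ j : Fin ℓ, f (Fin.castLE (by omega) j) (x j)) *
      (∫ y in simplexSet t u m, ∏ j : Fin m, f (⟨ℓ + (j : ℕ), by omega⟩ : Fin n) (y j)) := by
  subst h
  have hG := splitMap_mp ℓ m
  have hGe := (splitMap ℓ m).measurableEmbedding
  rw [← hG.setIntegral_preimage_emb hGe (fun z => ∏ i, f i (z i)) (Tset s t u (ℓ + m) ℓ)]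
  rw [splitMap_preimage ℓ m s t u hst htu]
  have hprod : ∀ p : (Fin ℓ → ℝ) × (Fin m → ℝ),
      ∏ i, f i (splitMap ℓ m p i) =
        (∏ j : Fin ℓ, f (Fin.castLE (by omega) j) (p.1 j)) *
        (∏ j : Fin m, f (⟨ℓ + (j : ℕ), by omega⟩ : Fin (ℓ + m)) (p.2 j)) := by
    rintro ⟨x, y⟩
    rw [← Equiv.prod_comp finSumFinEquiv (fun i => f i (splitMap ℓ m (x, y) i)),
      Fintype.prod_sum_type]
    congr 1
    · refine Finset.prod_congr rfl fun j _ => ?_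
      have h1 : finSumFinEquiv (Sum.inl j) = Fin.castLE (by omega : ℓ ≤ ℓ + m) j :=
        Fin.ext (by simp)
      rw [h1, splitMap_left x y _ (by simp)]
      exact congrArg _ (congrArg x (Fin.ext (by simp)))
    · refine Finset.prod_congr rfl fun j _ => ?_
      have h1 : finSumFinEquiv (Sum.inr j) = (⟨ℓ + (j : ℕ), by omega⟩ : Fin (ℓ + m)) :=
        Fin.ext (by simp)
      rw [h1, splitMap_right x y _ (by simp)]
      exact congrArg _ (congrArg y (Fin.ext (by simp)))
  rw [integral_congr_ae (Filter.Eventually.of_forall hprod)]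
  rw [Measure.volume_eq_prod, ← Measure.prod_restrict,
    integral_prod_mul (fun x : Fin ℓ → ℝ => ∏ j : Fin ℓ, f (Fin.castLE (by omega) j) (x j))
      (fun y : Fin m → ℝ => ∏ j : Fin m, f (⟨ℓ + (j : ℕ), by omega⟩ : Fin (ℓ + m)) (y j))]
  congr 1
  exact setIntegral_congr_set (ico_simplex_ae s t ℓ)

/-- Decomposition of the simplex into the pieces. -/
lemma simplex_eq_iUnion (s t u : ℝ) (n : ℕ) :
    simplexSet s u n = ⋃ ℓ : Fin (n + 1), Tset s t u n (ℓ : ℕ) := by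
  ext x
  simp only [Set.mem_iUnion]
  constructor
  · rintro ⟨hx, hm⟩
    classical
    set ℓ := (Finset.univ.filter (fun i : Fin n => x i < t)).card with hℓdef
    have hℓle : ℓ ≤ n := le_trans (Finset.card_filter_le _ _) (by simp)
    refine ⟨⟨ℓ, by omega⟩, hx, hm, fun i hi => ?_, fun i hi => ?_⟩
    · by_contra hcon
      push_neg at hcon
      have hsub : Finset.univ.filter (fun j : Fin n => x j < t) ⊆ Finset.Iio i := by
        intro j hj
        simp only [Finset.mem_filter] at hj
        rw [Finset.mem_Iio]
        by_contra hji
        push_neg at hji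
        exact absurd (lt_of_le_of_lt (hcon.trans (hm.monotone hji)) hj.2) (lt_irrefl _)
      have hcard := Finset.card_le_card hsub
      rw [Fin.card_Iio] at hcard
      simp only [Fin.lt_def] at hi
      omega
    · by_contra hcon
      push_neg at hcon
      have hsub : Finset.Iic i ⊆ Finset.univ.filter (fun j : Fin n => x j < t) := by
        intro j hj
        simp only [Finset.mem_Iic] at hj
        simp only [Finset.mem_filter, Finset.mem_univ, true_and]
        exact lt_of_le_of_lt (hm.monotone hj) hcon
      have hcard := Finset.card_le_card hsub
      rw [Fin.card_Iic] at hcard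
      simp only at hi
      omega
  · rintro ⟨ℓ, hx, hm, -, -⟩
    exact ⟨hx, hm⟩

lemma Tset_pairwise_disjoint (s t u : ℝ) (n : ℕ) :
    Pairwise (Function.onFun Disjoint (fun ℓ : Fin (n + 1) => Tset s t u n (ℓ : ℕ))) := by
  have key : ∀ a b : Fin (n + 1), (a : ℕ) < (b : ℕ) →
      Disjoint (Tset s t u n (a : ℕ)) (Tset s t u n (b : ℕ)) := by
    intro a b hab
    rw [Set.disjoint_left]
    rintro x ⟨-, -, -, h4a⟩ ⟨-, -, h3b, -⟩
    have hi : (a : ℕ) < n := by have := b.isLt; omega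
    exact absurd (h4a ⟨(a : ℕ), hi⟩ (le_refl _)) (not_le.mpr (h3b ⟨(a : ℕ), hi⟩ hab))
  intro a b hab
  rcases lt_or_gt_of_ne (fun h => hab (Fin.ext h) : (a : ℕ) ≠ (b : ℕ)) with h | h
  · exact key a b h
  · exact (key b a h).symm


end ChenAux

open ChenAux

/-- Chen's identity: for a continuously differentiable path `X`,
`0 ≤ s < t < u ≤ 1` and a multi-index `(i₁,…,i_k)`,
`S^{(i₁,…,i_k)}_{[s,u]}(X) = Σ_{ℓ=0}^{k} S^{(i₁,…,i_ℓ)}_{[s,t]}(X) ⬝ S^{(i_{ℓ+1},…,i_k)}_{[t,u]}(X)`,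
with the convention that the empty-index coefficient equals 1. -/
theorem chen_identity {d k : ℕ} (X : ℝ → EuclideanSpace ℝ (Fin d))
    (hX : ContDiff ℝ 1 X) (s t u : ℝ)
    (hs : 0 ≤ s) (hst : s < t) (htu : t < u) (hu : u ≤ 1)
    (I : Fin k → Fin d) :
    sigCoeffOn X I s u =
      ∑ ℓ : Fin (k + 1),
        sigCoeffOn X (I ∘ Fin.castLE (Nat.lt_succ_iff.mp ℓ.isLt)) s t *
          sigCoeffOn X
            (fun j : Fin (k - (ℓ : ℕ)) =>
              I (Fin.cast (Nat.sub_add_cancel (Nat.lt_succ_iff.mp ℓ.isLt)) (j.addNat ℓ)))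
            t u := by
  classical
  set f : Fin k → ℝ → ℝ := fun i r => deriv (fun τ => X τ (I i)) r with hfdef
  have hf : ∀ i : Fin k, Continuous (f i) := by
    intro i
    exact (((EuclideanSpace.proj (I i)).contDiff).comp hX).continuous_deriv le_rfl
  have hF : Continuous fun x : Fin k → ℝ => ∏ i, f i (x i) :=
    continuous_finset_prod _ fun i _ => (hf i).comp (continuous_apply i)
  have hTsub : ∀ ℓ : ℕ, Tset s t u k ℓ ⊆ Set.univ.pi fun _ => Set.Icc s u := by
    rintro ℓ x ⟨h1, -⟩ i -
    exact h1 i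
  have main : sigCoeffOn X I s u = ∫ x in simplexSet s u k, ∏ i, f i (x i) := rfl
  rw [main, simplex_eq_iUnion s t u k,
    integral_iUnion_fintype (fun ℓ : Fin (k + 1) => measurableSet_Tset s t u k ℓ)
      (Tset_pairwise_disjoint s t u k)
      (fun ℓ : Fin (k + 1) => integrableOn_of_subset_box hF s u (hTsub ℓ))]
  refine Finset.sum_congr rfl fun ℓ _ => ?_
  have hℓ : (ℓ : ℕ) ≤ k := Nat.lt_succ_iff.mp ℓ.isLt
  rw [split_integral (Nat.add_sub_cancel' hℓ) f hf s t u hst.le htu.le]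
  congr 1
  have e2 : sigCoeffOn X
      (fun j : Fin (k - (ℓ : ℕ)) =>
        I (Fin.cast (Nat.sub_add_cancel hℓ) (j.addNat ℓ))) t u =
      ∫ y in simplexSet t u (k - (ℓ : ℕ)),
        ∏ j, f (Fin.cast (Nat.sub_add_cancel hℓ) (j.addNat ℓ)) (y j) := rfl
  rw [e2]
  refine integral_congr_ae (Filter.Eventually.of_forall fun y => ?_)
  refine Finset.prod_congr rfl fun j _ => ?_
  exact congrArg (fun z : Fin k => f z (y j))
    (Fin.ext (by simp only [Fin.coe_cast, Fin.coe_addNat]; omega))
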